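/- Let G be a simple graph, C a longest cycle in G with a fixed orientation, H a component of G − V(C), and let u, v be distinct vertices of C each having a neighbor in H. Then u⁺v⁺ ∉ E(G) and u⁻v⁻ ∉ E(G), where u⁺, u⁻ denote the successor and predecessor of u on C. -/

import Mathlib

open SimpleGraph

def IsCycleEmb {V : Type*} (G : SimpleGraph V) (n : ℕ) (f : ZMod n → V) : Prop :=
  3 ≤ n ∧ Function.Injective f ∧ ∀ i : ZMod n, G.Adj (f i) (f (i + 1))

def IsLongestCycle {V : Type*} (G : SimpleGraph V) (n : ℕ) (f : ZMod n → V) : Prop :=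
  IsCycleEmb G n f ∧ ∀ (m : ℕ) (g : ZMod m → V), IsCycleEmb G m g → m ≤ n

def IsDominatingCycle {V : Type*} (G : SimpleGraph V) (n : ℕ) (f : ZMod n → V) : Prop :=
  IsCycleEmb G n f ∧ ∀ a b : V, G.Adj a b → a ∈ Set.range f ∨ b ∈ Set.range f

def IsCompOutside {V : Type*} (G : SimpleGraph V) (C : Set V) (H : Set V) : Prop :=
  H.Nonempty ∧ Disjoint H C ∧ (G.induce H).Connected ∧
    ∀ a ∈ H, ∀ b : V, G.Adj a b → b ∉ C → b ∈ H

def TwoConnected {V : Type*} (G : SimpleGraph V) : Prop :=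
  3 ≤ Nat.card V ∧ ∀ v : V, (G.induce ({v}ᶜ : Set V)).Connected

def KConnected {V : Type*} (G : SimpleGraph V) (k : ℕ) : Prop :=
  k < Nat.card V ∧ ∀ S : Set V, S.ncard < k → (G.induce (Sᶜ : Set V)).Connected

def HFree {W V : Type*} (H : SimpleGraph W) (G : SimpleGraph V) : Prop :=
  ¬ Nonempty (H ↪g G)

def IsCompleteMultipartite {V : Type*} (G : SimpleGraph V) : Prop :=
  ∃ s : Setoid V, ∀ a b : V, G.Adj a b ↔ ¬ s.r a b

/-- `W = K₁ + 3K₂`: vertex 0 joined to three disjoint edges 12, 34, 56. -/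
def Wgraph : SimpleGraph (Fin 7) :=
  SimpleGraph.fromRel (fun a b =>
    a = 0 ∨ (a = 1 ∧ b = 2) ∨ (a = 3 ∧ b = 4) ∨ (a = 5 ∧ b = 6))

/-- `Z₁`, the paw: triangle 012 plus pendant edge 23. -/
def pawGraph : SimpleGraph (Fin 4) :=
  SimpleGraph.fromRel (fun a b =>
    (a = 0 ∧ b = 1) ∨ (a = 1 ∧ b = 2) ∨ (a = 0 ∧ b = 2) ∨ (a = 2 ∧ b = 3))

/-- The claw `K₁,₃`. -/
def clawGraph : SimpleGraph (Fin 4) :=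
  SimpleGraph.fromRel (fun a _ => a = 0)

/-- `K₄` minus the edge 23. -/
def K4minusGraph : SimpleGraph (Fin 4) :=
  SimpleGraph.fromRel (fun a b => ¬((a = 2 ∧ b = 3) ∨ (a = 3 ∧ b = 2)))

/-- `K₁,₃**`: spider with legs of lengths 2, 2, 1 (center 0, legs 0-1-2, 0-3-4, 0-5). -/
def spider221 : SimpleGraph (Fin 6) :=
  SimpleGraph.fromRel (fun a b =>
    (a = 0 ∧ b = 1) ∨ (a = 1 ∧ b = 2) ∨ (a = 0 ∧ b = 3) ∨ (a = 3 ∧ b = 4) ∨ (a = 0 ∧ b = 5))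

/-- The theta graph `A_s`: two vertices joined by three internally disjoint paths,
each with `s` internal vertices. -/
def thetaGraph (s : ℕ) : SimpleGraph (Fin 2 ⊕ Fin 3 × Fin s) :=
  SimpleGraph.fromRel (fun a b =>
    (∃ (j : Fin 3) (k : Fin s), a = Sum.inl 0 ∧ b = Sum.inr (j, k) ∧ (k : ℕ) = 0) ∨
    (∃ (j : Fin 3) (k : Fin s), a = Sum.inl 1 ∧ b = Sum.inr (j, k) ∧ (k : ℕ) = s - 1) ∨
    (∃ (j : Fin 3) (k l : Fin s), a = Sum.inr (j, k) ∧ b = Sum.inr (j, l) ∧ (l : ℕ) = (k : ℕ) + 1))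

/-- `A′_s = 2K₁ + sK₂`. -/
def APrime (s : ℕ) : SimpleGraph (Fin 2 ⊕ Fin s × Fin 2) :=
  SimpleGraph.fromRel (fun a b =>
    (∃ (i : Fin 2) (x : Fin s × Fin 2), a = Sum.inl i ∧ b = Sum.inr x) ∨
    (∃ j : Fin s, a = Sum.inr (j, 0) ∧ b = Sum.inr (j, 1)))

/-- `A″_s = K₂ + (2K₂ ∪ K_s)`. -/
def ADoublePrime (s : ℕ) : SimpleGraph (Fin 2 ⊕ (Fin 2 × Fin 2 ⊕ Fin s)) :=
  SimpleGraph.fromRel (fun a b =>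
    (∃ i : Fin 2, a = Sum.inl i) ∨
    (∃ j : Fin 2, a = Sum.inr (Sum.inl (j, 0)) ∧ b = Sum.inr (Sum.inl (j, 1))) ∨
    (∃ p q : Fin s, a = Sum.inr (Sum.inr p) ∧ b = Sum.inr (Sum.inr q)))

/-- `A_s⁽¹⁾`: two disjoint triangles joined by three vertex-disjoint paths with `s`
internal vertices each. -/
def AOne (s : ℕ) : SimpleGraph (Fin 2 × Fin 3 ⊕ Fin 3 × Fin s) :=
  SimpleGraph.fromRel (fun a b =>
    (∃ (t : Fin 2) (i j : Fin 3), a = Sum.inl (t, i) ∧ b = Sum.inl (t, j)) ∨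
    (∃ (j : Fin 3) (k : Fin s), a = Sum.inl (0, j) ∧ b = Sum.inr (j, k) ∧ (k : ℕ) = 0) ∨
    (∃ (j : Fin 3) (k : Fin s), a = Sum.inl (1, j) ∧ b = Sum.inr (j, k) ∧ (k : ℕ) = s - 1) ∨
    (∃ (j : Fin 3) (k l : Fin s), a = Sum.inr (j, k) ∧ b = Sum.inr (j, l) ∧ (l : ℕ) = (k : ℕ) + 1))

/-- `A_s⁽⁵⁾`: vertices `x₁, x₂` and `y_{i,j}`; edges `x₁x₂`, `y_{1,j}y_{2,j}`, `x_i y_{i,j}`. -/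
def AFive (s : ℕ) : SimpleGraph (Fin 2 ⊕ Fin 2 × Fin s) :=
  SimpleGraph.fromRel (fun a b =>
    (a = Sum.inl 0 ∧ b = Sum.inl 1) ∨
    (∃ j : Fin s, a = Sum.inr (0, j) ∧ b = Sum.inr (1, j)) ∨
    (∃ (i : Fin 2) (j : Fin s), a = Sum.inl i ∧ b = Sum.inr (i, j)))

lemma isCycleEmb_of_list {V : Type*} (G : SimpleGraph V) (L : List V)
    (h3 : 3 ≤ L.length) (hnd : L.Nodup) (hch : L.Chain' G.Adj)
    (hcl : G.Adj (L.getLast (by rintro rfl; simp at h3)) (L.head (by rintro rfl; simp at h3))) :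
    ∃ g : ZMod L.length → V, IsCycleEmb G L.length g := by
  have hpos : 0 < L.length := by omega
  haveI : NeZero L.length := ⟨by omega⟩
  refine ⟨fun z => L.get ⟨z.val, z.val_lt⟩, h3, ?_, ?_⟩
  · intro a b hab
    have := List.nodup_iff_injective_get.mp hnd hab
    exact ZMod.val_injective _ (by simpa using congrArg Fin.val this)
  · intro z
    have h1 : (1 : ℕ) % L.length = 1 := Nat.mod_eq_of_lt (by omega)
    have hv : (z + 1).val = (z.val + 1) % L.length := by
      rw [ZMod.val_add, ZMod.val_one_eq_one_mod, h1]
    show G.Adj (L.get ⟨z.val, z.val_lt⟩) (L.get ⟨(z+1).val, (z+1).val_lt⟩)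
    by_cases h : z.val + 1 < L.length
    · have h2 : (z + 1).val = z.val + 1 := by rw [hv, Nat.mod_eq_of_lt h]
      have hg : L.get ⟨(z+1).val, (z+1).val_lt⟩ = L.get ⟨z.val + 1, by omega⟩ := by
        congr 1; exact Fin.ext h2
      rw [hg]
      exact List.isChain_iff_getElem.mp hch z.val (by omega)
    · have hz : z.val = L.length - 1 := by have := z.val_lt; omega
      have h2 : (z + 1).val = 0 := by
        rw [hv, hz, Nat.sub_add_cancel (by omega : 1 ≤ L.length), Nat.mod_self]
      have hlast : L.get ⟨z.val, z.val_lt⟩ = L.getLast (by rintro rfl; simp at h3) := by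
        rw [List.getLast_eq_getElem]; simp only [List.get_eq_getElem, hz]
      have hhead : L.get ⟨(z+1).val, (z+1).val_lt⟩ = L.head (by rintro rfl; simp at h3) := by
        rw [← List.get_mk_zero hpos]; congr 1; exact Fin.ext h2
      rw [hlast, hhead]; exact hcl

lemma range_map_getLast? {β : Type*} (g : ℕ → β) (d : ℕ) (hd : 1 ≤ d) :
    ((List.range d).map g).getLast? = some (g (d-1)) := by
  obtain ⟨m, rfl⟩ : ∃ m, d = m + 1 := ⟨d - 1, by omega⟩
  rw [List.range_succ]; simp

lemma range_map_head? {β : Type*} (g : ℕ → β) (d : ℕ) (hd : 1 ≤ d) :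
    ((List.range d).map g).head? = some (g 0) := by
  obtain ⟨m, rfl⟩ : ∃ m, d = m + 1 := ⟨d - 1, by omega⟩
  rw [List.range_succ_eq_map]; simp

lemma chain'_range_map {β : Type*} (R : β → β → Prop) (g : ℕ → β) (d : ℕ)
    (h : ∀ k, k + 1 < d → R (g k) (g (k+1))) : ((List.range d).map g).Chain' R := by
  show List.IsChain _ _
  rw [List.isChain_iff_getElem]
  intro k hk
  simp only [List.length_map, List.length_range] at hk
  simp only [List.get_eq_getElem, List.getElem_map, List.getElem_range]
  exact h k (by omega)

lemma nodup_range_map {β : Type*} (g : ℕ → β) (d : ℕ)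
    (h : ∀ a < d, ∀ b < d, g a = g b → a = b) : ((List.range d).map g).Nodup :=
  List.Nodup.map_on (fun a ha b hb => h a (List.mem_range.mp ha) b (List.mem_range.mp hb))
    (List.nodup_range)

lemma core {V : Type*} (G : SimpleGraph V) (n : ℕ) (f : ZMod n → V)
    (H : Set V) (hC : IsLongestCycle G n f) (hH : IsCompOutside G (Set.range f) H)
    (i j : ZMod n) (hij : f i ≠ f j)
    (hu : ∃ x ∈ H, G.Adj (f i) x) (hv : ∃ x ∈ H, G.Adj (f j) x) :
    ¬ G.Adj (f (i + 1)) (f (j + 1)) := by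
  classical
  intro hadj
  obtain ⟨x, hxH, hxu⟩ := hu
  obtain ⟨y, hyH, hyv⟩ := hv
  obtain ⟨⟨h3, finj, fadj⟩, hmax⟩ := hC
  haveI : NeZero n := ⟨by omega⟩
  have hijne : i ≠ j := fun h => hij (by rw [h])
  set d : ℕ := (j - i).val with hd
  have hd0 : d ≠ 0 := by
    intro h
    exact hijne.symm (sub_eq_zero.mp (by rwa [← ZMod.val_eq_zero]))
  have hd1 : 1 ≤ d := by omega
  have hdn : d < n := ZMod.val_lt _
  have hcast : ∀ a : ℕ, a < n → ∀ b : ℕ, b < n → ((a : ZMod n) = b) → a = b := by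
    intro a ha b hb hab
    have := congrArg ZMod.val hab
    rwa [ZMod.val_natCast, ZMod.val_natCast, Nat.mod_eq_of_lt ha, Nat.mod_eq_of_lt hb] at this
  have hdj : i + (d : ZMod n) = j := by
    rw [hd, ZMod.natCast_val, ZMod.cast_id]; ring
  obtain ⟨hne, hdisj, hconn, hclosed⟩ := hH
  obtain ⟨w, hw⟩ : ∃ w : (G.induce H).Walk ⟨y, hyH⟩ ⟨x, hxH⟩, w.IsPath :=
    ⟨(hconn ⟨y, hyH⟩ ⟨x, hxH⟩).some.toPath.1, (hconn _ _).some.toPath.2⟩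
  set P : List V := w.support.map Subtype.val with hP
  have hPne : P ≠ [] := by
    rw [hP]; simp only [ne_eq, List.map_eq_nil_iff]; exact w.support_ne_nil
  have hPlen : 1 ≤ P.length := List.length_pos_iff.mpr hPne
  have hPhead : P.head? = some y := by
    rw [hP, List.head?_map, List.head?_eq_head w.support_ne_nil, Walk.head_support]
    rfl
  have hPlast : P.getLast? = some x := by
    rw [hP, List.getLast?_map, List.getLast?_eq_getLast w.support_ne_nil,
      Walk.getLast_support]
    rfl
  have hPmem : ∀ v ∈ P, v ∈ H := by
    intro v hv
    rw [hP, List.mem_map] at hv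
    obtain ⟨⟨a, haH⟩, _, rfl⟩ := hv
    exact haH
  have hPnd : P.Nodup := (hw.support_nodup).map Subtype.val_injective
  have hPch : P.Chain' G.Adj := by
    rw [hP]
    exact List.isChain_map_of_isChain (Subtype.val)
      (fun a b (h : (G.induce H).Adj a b) => h) w.isChain_adj_support
  set gA : ℕ → V := fun t => f (i + 1 + (t : ZMod n)) with hgA
  set gB : ℕ → V := fun t => f (i - (t : ZMod n)) with hgB
  set A : List V := (List.range d).map gA with hA
  set B : List V := (List.range (n - d)).map gB with hB
  have hAlen : A.length = d := by simp [hA]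
  have hBlen : B.length = n - d := by simp [hB]
  have hmemA : ∀ v ∈ A, v ∈ Set.range f := by
    intro v hv; rw [hA, List.mem_map] at hv; obtain ⟨t, _, rfl⟩ := hv; exact ⟨_, rfl⟩
  have hmemB : ∀ v ∈ B, v ∈ Set.range f := by
    intro v hv; rw [hB, List.mem_map] at hv; obtain ⟨t, _, rfl⟩ := hv; exact ⟨_, rfl⟩
  -- nodup pieces
  have hAnd : A.Nodup := by
    apply nodup_range_map
    intro a ha b hb hab
    have := finj hab
    have h2 : (a : ZMod n) = b := by linear_combination this - i - 1
    exact hcast a (by omega) b (by omega) h2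
  have hBnd : B.Nodup := by
    apply nodup_range_map
    intro a ha b hb hab
    have := finj hab
    have h2 : (a : ZMod n) = b := by linear_combination i - this
    exact hcast a (by omega) b (by omega) h2
  have hABdisj : ∀ v ∈ A, v ∉ B := by
    intro v hvA hvB
    rw [hA, List.mem_map] at hvA
    rw [hB, List.mem_map] at hvB
    obtain ⟨t, ht, rfl⟩ := hvA
    obtain ⟨s, hs, hsv⟩ := hvB
    rw [List.mem_range] at ht hs
    have heq := finj hsv.symm
    have h0 : ((t + 1 + s : ℕ) : ZMod n) = 0 := by push_cast; linear_combination heq - i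
    rw [ZMod.natCast_eq_zero_iff] at h0
    have := Nat.le_of_dvd (by omega) h0
    omega
  have hPrange : ∀ v ∈ P, v ∉ Set.range f := by
    intro v hv hr
    exact Set.disjoint_left.mp hdisj (hPmem v hv) hr
  -- chains
  have hAch : A.Chain' G.Adj := by
    apply chain'_range_map
    intro k hk
    have := fadj (i + 1 + (k : ZMod n))
    convert this using 2
    push_cast
    ring
  have hBch : B.Chain' G.Adj := by
    apply chain'_range_map
    intro k hk
    have := (fadj (i - ((k : ZMod n) + 1))).symm
    convert this using 2 <;> (push_cast; ring)
  -- junction values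
  have hgAd : gA (d-1) = f j := by
    show f (i + 1 + ((d - 1 : ℕ) : ZMod n)) = f j
    congr 1
    rw [Nat.cast_sub hd1, ← hdj]
    push_cast
    ring
  have hAgetLast : A.getLast? = some (f j) := by
    rw [hA, range_map_getLast? _ _ hd1, hgAd]
  have hAhead : A.head? = some (f (i + 1)) := by
    rw [hA, range_map_head? _ _ hd1]; congr 1; rw [hgA]; push_cast; ring_nf
  have hBhead : B.head? = some (f i) := by
    rw [hB, range_map_head? _ _ (by omega)]; congr 1; rw [hgB]; push_cast; ring_nf
  have key : ((n - d - 1 : ℕ) : ZMod n) + ((d : ZMod n) + 1) = 0 := by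
    have h' : (n - d - 1) + (d + 1) = n := by omega
    have h2 := congrArg (Nat.cast : ℕ → ZMod n) h'
    push_cast at h2
    rw [ZMod.natCast_self] at h2
    linear_combination h2
  have hgBd : gB (n - d - 1) = f (j + 1) := by
    show f (i - ((n - d - 1 : ℕ) : ZMod n)) = f (j + 1)
    congr 1
    rw [← hdj]
    linear_combination -key
  have hBgetLast : B.getLast? = some (f (j + 1)) := by
    rw [hB, range_map_getLast? _ _ (by omega), hgBd]
  -- assemble
  set L : List V := A ++ (P ++ B) with hL
  have hLlen : L.length = n + P.length := by
    rw [hL]; simp [hAlen, hBlen]; omega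
  have hLnd : L.Nodup := by
    rw [hL, List.nodup_append, List.nodup_append]
    refine ⟨hAnd, ⟨hPnd, hBnd, ?_⟩, ?_⟩
    · intro v hvP b hvB hvb
      exact hPrange v hvP (hmemB v (by rw [hvb]; exact hvB))
    · intro v hvA b hv hvb
      rw [← hvb] at hv
      rcases List.mem_append.mp hv with h | h
      · exact hPrange v h (hmemA v hvA)
      · exact hABdisj v hvA h
  have hLch : L.Chain' G.Adj := by
    rw [hL]; show List.IsChain _ _; rw [List.isChain_append]
    refine ⟨hAch, ?_, ?_⟩
    · rw [List.isChain_append]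
      refine ⟨hPch, hBch, ?_⟩
      intro a ha b hb
      rw [hPlast] at ha
      rw [hBhead] at hb
      cases ha; cases hb
      exact hxu.symm
    · intro a ha b hb
      rw [hAgetLast] at ha
      rw [List.head?_append, hPhead] at hb
      cases ha; cases hb
      exact hyv
  have hL3 : 3 ≤ L.length := by omega
  have hLne : L ≠ [] := by
    intro h
    rw [h] at hLlen
    simp at hLlen
    omega
  have hLgetLast : L.getLast hLne = f (j + 1) := by
    have h1 : L.getLast? = some (f (j + 1)) := by
      rw [hL, List.getLast?_append, List.getLast?_append, hBgetLast]
      rfl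
    rw [List.getLast?_eq_getLast hLne] at h1
    exact Option.some_injective _ h1
  have hLhead : L.head hLne = f (i + 1) := by
    have h1 : L.head? = some (f (i + 1)) := by
      rw [hL, List.head?_append, hAhead]
      rfl
    rw [List.head?_eq_head hLne] at h1
    exact Option.some_injective _ h1
  have hcl : G.Adj (L.getLast hLne) (L.head hLne) := by
    rw [hLgetLast, hLhead]
    exact hadj.symm
  obtain ⟨g, hg⟩ := isCycleEmb_of_list G L hL3 hLnd hLch hcl
  have := hmax L.length g hg
  omega

lemma longest_rev {V : Type*} (G : SimpleGraph V) (n : ℕ) (f : ZMod n → V)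
    (hC : IsLongestCycle G n f) : IsLongestCycle G n (fun k => f (-k)) := by
  obtain ⟨⟨h3, finj, fadj⟩, hmax⟩ := hC
  refine ⟨⟨h3, ?_, ?_⟩, hmax⟩
  · intro a b hab
    have := finj hab
    exact neg_injective this
  · intro k
    have h := (fadj (-(k + 1))).symm
    have e : -(k + 1) + 1 = -k := by ring
    rw [e] at h
    exact h

lemma range_rev {V : Type*} (n : ℕ) (f : ZMod n → V) :
    Set.range (fun k => f (-k)) = Set.range f := by
  ext v
  constructor
  · rintro ⟨k, rfl⟩; exact ⟨-k, rfl⟩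
  · rintro ⟨k, rfl⟩; exact ⟨-k, by simp⟩

/-- If `u = f i` and `v = f j` are distinct vertices of a longest cycle `C`, each with a
neighbor in a component `H` of `G - V(C)`, then `u⁺v⁺ ∉ E(G)` and `u⁻v⁻ ∉ E(G)`. -/
theorem stmt1 {V : Type*} [Fintype V] (G : SimpleGraph V) (n : ℕ) (f : ZMod n → V)
    (H : Set V) (hC : IsLongestCycle G n f) (hH : IsCompOutside G (Set.range f) H)
    (i j : ZMod n) (hij : f i ≠ f j)
    (hu : ∃ x ∈ H, G.Adj (f i) x) (hv : ∃ x ∈ H, G.Adj (f j) x) :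
    ¬ G.Adj (f (i + 1)) (f (j + 1)) ∧ ¬ G.Adj (f (i - 1)) (f (j - 1)) := by
  constructor
  · exact core G n f H hC hH i j hij hu hv
  · set f' : ZMod n → V := fun k => f (-k) with hf'
    have hC' : IsLongestCycle G n f' := longest_rev G n f hC
    have hH' : IsCompOutside G (Set.range f') H := by rw [hf', range_rev]; exact hH
    have h1 : f' (-i) = f i := by rw [hf']; simp
    have h2 : f' (-j) = f j := by rw [hf']; simp
    have hij' : f' (-i) ≠ f' (-j) := by rw [h1, h2]; exact hij
    have hu' : ∃ x ∈ H, G.Adj (f' (-i)) x := by rw [h1]; exact hu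
    have hv' : ∃ x ∈ H, G.Adj (f' (-j)) x := by rw [h2]; exact hv
    have hres := core G n f' H hC' hH' (-i) (-j) hij' hu' hv'
    have e1 : f' (-i + 1) = f (i - 1) := congrArg f (by ring)
    have e2 : f' (-j + 1) = f (j - 1) := congrArg f (by ring)
    rw [e1, e2] at hres
    exact hres
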